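/- arXiv:2410.05013 — 7 statements merged into one kernel-verified Lean document; each statement's English description precedes it below -/
import Mathlib

section
/- For fixed real numbers r_x, r_y, d with d > 0 and κ₀ > 0, the map (s_x, s_y) ↦ (κ_x, κ_y) defined by κ_x = κ₀(r_x−s_x)/√((r_x−s_x)² + (r_y−s_y)² + d²) and κ_y = κ₀(r_y−s_y)/√((r_x−s_x)² + (r_y−s_y)² + d²) has Jacobian determinant with absolute value equal to κ₀² d² / (d² + (r_x−s_x)² + (r_y−s_y)²)². -/
open Real

/-- The spatial-frequency map has absolute Jacobian determinant
`κ₀² d² / (d² + (r_x−s_x)² + (r_y−s_y)²)²`. -/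
theorem stmt_0 (rx ry d κ₀ : ℝ) (hd : 0 < d) (hκ : 0 < κ₀) (s : ℝ × ℝ) :
    |LinearMap.det ((fderiv ℝ (fun p : ℝ × ℝ =>
        ((κ₀ * (rx - p.1) / Real.sqrt ((rx - p.1)^2 + (ry - p.2)^2 + d^2),
          κ₀ * (ry - p.2) / Real.sqrt ((rx - p.1)^2 + (ry - p.2)^2 + d^2)) : ℝ × ℝ)) s :
        (ℝ × ℝ) →L[ℝ] (ℝ × ℝ)).toLinearMap)|
      = κ₀^2 * d^2 / (d^2 + (rx - s.1)^2 + (ry - s.2)^2)^2 := by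
  have hQ : 0 < (rx - s.1)^2 + (ry - s.2)^2 + d^2 := by positivity
  have hR : 0 < Real.sqrt ((rx - s.1)^2 + (ry - s.2)^2 + d^2) := Real.sqrt_pos.mpr hQ
  have h1 : HasFDerivAt (fun p : ℝ × ℝ => rx - p.1)
      (-(ContinuousLinearMap.fst ℝ ℝ ℝ)) s := (hasFDerivAt_fst).const_sub rx
  have h2 : HasFDerivAt (fun p : ℝ × ℝ => ry - p.2)
      (-(ContinuousLinearMap.snd ℝ ℝ ℝ)) s := (hasFDerivAt_snd).const_sub ry
  have h1sq : HasFDerivAt (fun p : ℝ × ℝ => (rx - p.1)^2) ((2*(rx - s.1)) • -(ContinuousLinearMap.fst ℝ ℝ ℝ)) s := by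
    have := h1.mul h1
    simp only [pow_two]
    rw [two_mul, add_smul]
    exact this
  have h2sq : HasFDerivAt (fun p : ℝ × ℝ => (ry - p.2)^2) ((2*(ry - s.2)) • -(ContinuousLinearMap.snd ℝ ℝ ℝ)) s := by
    have := h2.mul h2
    simp only [pow_two]
    rw [two_mul, add_smul]
    exact this
  have hq := (h1sq.add h2sq).add_const (d^2)
  have hinv := ((Real.hasDerivAt_sqrt hQ.ne').inv hR.ne').comp_hasFDerivAt s hq
  have hf1 := (h1.const_mul κ₀).mul hinv
  have hf2 := (h2.const_mul κ₀).mul hinv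
  have hf := hf1.prodMk hf2
  simp only [Function.comp_def, Pi.mul_apply, Pi.add_apply, Pi.inv_apply] at hf
  simp only [div_eq_mul_inv]
  rw [hf.fderiv]
  rw [← LinearMap.det_toMatrix (Module.Basis.finTwoProd ℝ), Matrix.det_fin_two]
  simp only [LinearMap.toMatrix_apply, Module.Basis.finTwoProd_zero, Module.Basis.finTwoProd_one,
    Module.Basis.coe_finTwoProd_repr, ContinuousLinearMap.coe_coe, ContinuousLinearMap.prod_apply,
    ContinuousLinearMap.add_apply, ContinuousLinearMap.smul_apply,
    ContinuousLinearMap.neg_apply, ContinuousLinearMap.coe_fst', ContinuousLinearMap.coe_snd',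
    Matrix.cons_val_zero, Matrix.cons_val_one, Matrix.head_cons, smul_eq_mul]
  rw [abs_eq (by positivity : (0:ℝ) ≤ κ₀ ^ 2 * d ^ 2 * ((d ^ 2 + (rx - s.1) ^ 2 + (ry - s.2) ^ 2) ^ 2)⁻¹)]
  left
  have hr2 : (Real.sqrt ((rx - s.1)^2 + (ry - s.2)^2 + d^2))^2
      = (rx - s.1)^2 + (ry - s.2)^2 + d^2 := Real.sq_sqrt hQ.le
  generalize hgen : Real.sqrt ((rx - s.1)^2 + (ry - s.2)^2 + d^2) = r at hr2 hR ⊢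
  have hd2 : d^2 = r^2 - (rx - s.1)^2 - (ry - s.2)^2 := by linarith
  rw [hd2]
  field_simp [hR.ne']
  rw [show r ^ 2 - (rx - s.1) ^ 2 - (ry - s.2) ^ 2 + (rx - s.1) ^ 2 + (ry - s.2) ^ 2 = r ^ 2
    from by ring]
  field_simp [hR.ne']
  ring
end

section
/- For fixed r_x, r_y, d with d > 0 and κ₀ > 0, the map (s_x, s_y) ↦ (κ₀(r_x−s_x)/ρ, κ₀(r_y−s_y)/ρ), where ρ = √((r_x−s_x)² + (r_y−s_y)² + d²), is injective on ℝ². -/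
open Real

/-- The spatial-frequency map is injective on ℝ². -/
theorem stmt_1 (rx ry d κ₀ : ℝ) (hd : 0 < d) (hκ : 0 < κ₀) :
    Function.Injective (fun p : ℝ × ℝ =>
      ((κ₀ * (rx - p.1) / Real.sqrt ((rx - p.1)^2 + (ry - p.2)^2 + d^2),
        κ₀ * (ry - p.2) / Real.sqrt ((rx - p.1)^2 + (ry - p.2)^2 + d^2)) : ℝ × ℝ)) := by
  intro p q h
  simp only [Prod.mk.injEq] at h
  obtain ⟨h1, h2⟩ := h
  set a := rx - p.1 with ha_def
  set b := ry - p.2 with hb_def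
  set a' := rx - q.1 with ha'_def
  set b' := ry - q.2 with hb'_def
  have hρpos : 0 < Real.sqrt (a^2 + b^2 + d^2) := Real.sqrt_pos.2 (by positivity)
  have hρ'pos : 0 < Real.sqrt (a'^2 + b'^2 + d^2) := Real.sqrt_pos.2 (by positivity)
  set ρ := Real.sqrt (a^2 + b^2 + d^2) with hρ_def
  set ρ' := Real.sqrt (a'^2 + b'^2 + d^2) with hρ'_def
  have hρsq : ρ^2 = a^2 + b^2 + d^2 := Real.sq_sqrt (by positivity)
  have hρ'sq : ρ'^2 = a'^2 + b'^2 + d^2 := Real.sq_sqrt (by positivity)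
  have ha : a * ρ' = a' * ρ := by
    field_simp at h1
    have h1' : κ₀ * (a * ρ') = κ₀ * (a' * ρ) := by linear_combination κ₀ * h1
    exact mul_left_cancel₀ (ne_of_gt hκ) h1'
  have hb : b * ρ' = b' * ρ := by
    field_simp at h2
    have h2' : κ₀ * (b * ρ') = κ₀ * (b' * ρ) := by linear_combination κ₀ * h2
    exact mul_left_cancel₀ (ne_of_gt hκ) h2'
  have e1 : a^2 * ρ'^2 = a'^2 * ρ^2 := by linear_combination (a * ρ' + a' * ρ) * ha
  have e2 : b^2 * ρ'^2 = b'^2 * ρ^2 := by linear_combination (b * ρ' + b' * ρ) * hb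
  have e3 : (a^2 + b^2) * (a'^2 + b'^2 + d^2) = (a'^2 + b'^2) * (a^2 + b^2 + d^2) := by
    rw [← hρsq, ← hρ'sq]; linarith [e1, e2]
  have hs : a^2 + b^2 = a'^2 + b'^2 := by nlinarith [e3, mul_pos hd hd]
  have hρeq : ρ = ρ' := by rw [hρ_def, hρ'_def]; congr 1; linarith [hs]
  have haa : a = a' := by
    rw [hρeq] at ha
    exact mul_right_cancel₀ (ne_of_gt hρ'pos) ha
  have hbb : b = b' := by
    rw [hρeq] at hb
    exact mul_right_cancel₀ (ne_of_gt hρ'pos) hb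
  have h1 : p.1 = q.1 := by have := haa; rw [ha_def, ha'_def] at this; linarith
  have h2 : p.2 = q.2 := by have := hbb; rw [hb_def, hb'_def] at this; linarith
  exact Prod.ext h1 h2
end

section
/- The function d ↦ ∫_{−a}^{a} ∫_{−b}^{b} d²/(d²+x²+y²)² dy dx (with a, b > 0 fixed) is strictly decreasing in d on (0, ∞) and tends to 0 as d → ∞. -/
open Real MeasureTheory Set Filter

noncomputable def Gfun (u v : ℝ) : ℝ := 1 / (1 + u^2 + v^2)^2

lemma Gfun_pos (u v : ℝ) : 0 < Gfun u v := by unfold Gfun; positivity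

lemma Gfun_cont : Continuous (Function.uncurry Gfun) := by
  apply Continuous.div continuous_const (by fun_prop)
  intro p
  have h : (0:ℝ) < (1 + p.1^2 + p.2^2)^2 := by positivity
  exact h.ne'

lemma Gfun_cont_right (u : ℝ) : Continuous (Gfun u) := by
  unfold Gfun
  apply Continuous.div continuous_const (by fun_prop)
  intro v
  have h : (0:ℝ) < (1 + u^2 + v^2)^2 := by positivity
  exact h.ne'

noncomputable def Iv (t u : ℝ) : ℝ := ∫ v in (-t)..t, Gfun u v

lemma Iv_cont (t : ℝ) : Continuous (Iv t) :=
  intervalIntegral.continuous_parametric_intervalIntegral_of_continuous' Gfun_cont _ _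

lemma Iv_pos {t : ℝ} (ht : 0 < t) (u : ℝ) : 0 < Iv t u :=
  intervalIntegral.intervalIntegral_pos_of_pos ((Gfun_cont_right u).intervalIntegrable _ _)
    (fun v => Gfun_pos u v) (by linarith)

lemma Iv_mono {t₁ t₂ : ℝ} (h0 : 0 ≤ t₁) (h : t₁ ≤ t₂) (u : ℝ) : Iv t₁ u ≤ Iv t₂ u :=
  intervalIntegral.integral_mono_interval (by linarith) (by linarith) h
    (Filter.Eventually.of_forall fun v => (Gfun_pos u v).le)
    ((Gfun_cont_right u).intervalIntegrable _ _)

noncomputable def Jfun (s t : ℝ) : ℝ := ∫ u in (-s)..s, Iv t u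

lemma Jfun_lt {s₁ s₂ t₁ t₂ : ℝ} (hs₁ : 0 < s₁) (hs : s₁ < s₂) (ht₁ : 0 < t₁) (ht : t₁ ≤ t₂) :
    Jfun s₁ t₁ < Jfun s₂ t₂ := by
  have ht₂ : 0 < t₂ := lt_of_lt_of_le ht₁ ht
  have h1 : Jfun s₁ t₁ ≤ Jfun s₁ t₂ :=
    intervalIntegral.integral_mono_on (by linarith) ((Iv_cont t₁).intervalIntegrable _ _)
      ((Iv_cont t₂).intervalIntegrable _ _) (fun u _ => Iv_mono ht₁.le ht u)
  have hA : IntervalIntegrable (Iv t₂) volume (-s₂) (-s₁) := (Iv_cont t₂).intervalIntegrable _ _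
  have hB : IntervalIntegrable (Iv t₂) volume (-s₁) s₁ := (Iv_cont t₂).intervalIntegrable _ _
  have hC : IntervalIntegrable (Iv t₂) volume s₁ s₂ := (Iv_cont t₂).intervalIntegrable _ _
  have e1 : (∫ u in (-s₂)..(-s₁), Iv t₂ u) + (∫ u in (-s₁)..s₁, Iv t₂ u)
      = ∫ u in (-s₂)..s₁, Iv t₂ u :=
    intervalIntegral.integral_add_adjacent_intervals hA hB
  have e2 : (∫ u in (-s₂)..s₁, Iv t₂ u) + (∫ u in s₁..s₂, Iv t₂ u)
      = ∫ u in (-s₂)..s₂, Iv t₂ u :=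
    intervalIntegral.integral_add_adjacent_intervals (hA.trans hB) hC
  have p1 : 0 ≤ ∫ u in (-s₂)..(-s₁), Iv t₂ u :=
    intervalIntegral.integral_nonneg (by linarith) (fun u _ => (Iv_pos ht₂ u).le)
  have p2 : 0 < ∫ u in s₁..s₂, Iv t₂ u :=
    intervalIntegral.intervalIntegral_pos_of_pos hC (fun u => Iv_pos ht₂ u) hs
  have h2 : Jfun s₁ t₂ < Jfun s₂ t₂ := by unfold Jfun; linarith
  linarith

lemma set_eq {c : ℝ} (h : -c ≤ c) (f : ℝ → ℝ) :
    (∫ x in Icc (-c) c, f x) = ∫ x in (-c)..c, f x := by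
  rw [intervalIntegral.integral_of_le h, integral_Icc_eq_integral_Ioc]

lemma comp_scale {d : ℝ} (hd : d ≠ 0) (c : ℝ) (f : ℝ → ℝ) :
    (∫ y in (-c)..c, f y) = d • ∫ v in (-(c/d))..(c/d), f (d * v) := by
  have h1 : (∫ y in (-c)..c, f y) = ∫ y in (-c)..c, (fun v => f (d * v)) (y / d) := by
    refine intervalIntegral.integral_congr fun y _ => ?_
    simp only
    rw [mul_comm, div_mul_cancel₀ _ hd]
  have h2 := intervalIntegral.integral_comp_div (a := -c) (b := c) (fun v => f (d * v)) hd
  rw [h1, h2, neg_div]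

lemma key {a b d : ℝ} (ha : -a ≤ a) (hb : -b ≤ b) (hd : 0 < d) :
    (∫ x in Icc (-a) a, ∫ y in Icc (-b) b, d^2 / (d^2 + x^2 + y^2)^2)
      = Jfun (a/d) (b/d) := by
  have hd' : d ≠ 0 := hd.ne'
  have hpt : ∀ u v : ℝ, d^2 / (d^2 + (d*u)^2 + (d*v)^2)^2 = (d^2)⁻¹ * Gfun u v := by
    intro u v
    unfold Gfun
    have h : (0:ℝ) < (1 + u^2 + v^2)^2 := by positivity
    field_simp
  have inner_eq : ∀ x : ℝ,
      (∫ y in Icc (-b) b, d^2 / (d^2 + x^2 + y^2)^2)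
        = d • ∫ v in (-(b/d))..(b/d), d^2 / (d^2 + x^2 + (d*v)^2)^2 := fun x => by
    rw [set_eq hb, comp_scale hd']
  calc (∫ x in Icc (-a) a, ∫ y in Icc (-b) b, d^2 / (d^2 + x^2 + y^2)^2)
      = ∫ x in (-a)..a, d • ∫ v in (-(b/d))..(b/d), d^2 / (d^2 + x^2 + (d*v)^2)^2 := by
        rw [set_eq ha]
        exact intervalIntegral.integral_congr fun x _ => inner_eq x
    _ = d • ∫ u in (-(a/d))..(a/d),
          d • ∫ v in (-(b/d))..(b/d), d^2 / (d^2 + (d*u)^2 + (d*v)^2)^2 := by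
        rw [comp_scale hd' a (fun x => d • ∫ v in (-(b/d))..(b/d), d^2 / (d^2 + x^2 + (d*v)^2)^2)]
    _ = d • ∫ u in (-(a/d))..(a/d), d • ((d^2)⁻¹ * Iv (b/d) u) := by
        congr 1
        refine intervalIntegral.integral_congr fun u _ => ?_
        congr 1
        show _ = (d^2)⁻¹ * ∫ v in (-(b/d))..(b/d), Gfun u v
        rw [← intervalIntegral.integral_const_mul]
        exact intervalIntegral.integral_congr fun v _ => hpt u v
    _ = d • (d * (d^2)⁻¹ * ∫ u in (-(a/d))..(a/d), Iv (b/d) u) := by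
        rw [← intervalIntegral.integral_const_mul]
        congr 1
        exact intervalIntegral.integral_congr fun u _ => by simp [smul_eq_mul]; ring
    _ = Jfun (a/d) (b/d) := by
        unfold Jfun
        rw [smul_eq_mul]
        field_simp

/-- The effective-DoF integral is strictly decreasing in the distance d and tends
to 0 as d → ∞. -/
theorem stmt_6 (a b : ℝ) (ha : 0 < a) (hb : 0 < b) :
    StrictAntiOn (fun d : ℝ =>
        ∫ x in Icc (-a) a, ∫ y in Icc (-b) b, d^2 / (d^2 + x^2 + y^2)^2) (Ioi 0) ∧
    Tendsto (fun d : ℝ =>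
        ∫ x in Icc (-a) a, ∫ y in Icc (-b) b, d^2 / (d^2 + x^2 + y^2)^2)
      atTop (nhds 0) := by
  have ha' : -a ≤ a := by linarith
  have hb' : -b ≤ b := by linarith
  constructor
  · intro d₁ h₁ d₂ h₂ h12
    simp only [mem_Ioi] at h₁ h₂
    simp only
    rw [key ha' hb' h₁, key ha' hb' h₂]
    refine Jfun_lt (by positivity) ?_ (by positivity) ?_
    · exact div_lt_div_of_pos_left ha h₁ h12
    · exact le_of_lt (div_lt_div_of_pos_left hb h₁ h12)
  · apply squeeze_zero_norm' (a := fun d => ((1/d^2) * (2*b)) * (2*a))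
    · filter_upwards [eventually_gt_atTop (0:ℝ)] with d hd
      have hd' : d ≠ 0 := hd.ne'
      have hIcb : volume (Icc (-b) b) < ⊤ := measure_Icc_lt_top
      have hIca : volume (Icc (-a) a) < ⊤ := measure_Icc_lt_top
      have hbnd : ∀ x y : ℝ, ‖d^2 / (d^2 + x^2 + y^2)^2‖ ≤ 1/d^2 := by
        intro x y
        rw [Real.norm_eq_abs, abs_of_nonneg (by positivity)]
        have h1 : d^2 / (d^2 + x^2 + y^2)^2 ≤ d^2 / (d^2)^2 := by
          apply div_le_div_of_nonneg_left (by positivity) (by positivity)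
          nlinarith [sq_nonneg x, sq_nonneg y]
        have h2 : d^2 / (d^2)^2 = 1/d^2 := by field_simp
        linarith
      have hinner : ∀ x : ℝ, ‖∫ y in Icc (-b) b, d^2 / (d^2 + x^2 + y^2)^2‖ ≤ (1/d^2) * (2*b) := by
        intro x
        have := norm_setIntegral_le_of_norm_le_const_ae' (μ := volume)
          (f := fun y => d^2 / (d^2 + x^2 + y^2)^2) hIcb
          (Filter.Eventually.of_forall fun y _ => hbnd x y)
        have hv : (volume (Icc (-b) b)).toReal = 2*b := by
          rw [Real.volume_Icc, ENNReal.toReal_ofReal (by linarith)]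
          ring
        rwa [measureReal_def, hv] at this
      have := norm_setIntegral_le_of_norm_le_const_ae' (μ := volume)
        (f := fun x => ∫ y in Icc (-b) b, d^2 / (d^2 + x^2 + y^2)^2) hIca
        (Filter.Eventually.of_forall fun x _ => hinner x)
      have hv : (volume (Icc (-a) a)).toReal = 2*a := by
        rw [Real.volume_Icc, ENNReal.toReal_ofReal (by linarith)]
        ring
      rwa [measureReal_def, hv] at this
    · have h1 : Tendsto (fun d : ℝ => d^2) atTop atTop :=
        tendsto_pow_atTop (by norm_num)
      have h2 : Tendsto (fun d : ℝ => 1/d^2) atTop (nhds 0) := by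
        simpa [one_div, Pi.inv_def] using h1.inv_tendsto_atTop
      have h3 := (h2.mul_const (2*b)).mul_const (2*a)
      simpa using h3
end

section
/- With the geometry of Proposition 2 (user surfaces of side s centered on the z-axis at distances d₁ < d₂, BS surface of height R_y centered at height h₀ ≥ (R_y+s)/2 on the plane z = 0), if 0 ≤ d₂ − d₁ < (2s/(2h₀ − s − R_y))·d₁ then there exists a point p on the BS surface such that the central projection of user 1's surface from p onto user 2's plane has nonempty intersection with user 2's surface. -/
open Set

/-- Converse of the no-blocking condition: if the inter-user distance is below the
threshold, there is an observation point on the BS surface from which the central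
projection of user 1's square onto user 2's plane meets user 2's square. -/
theorem stmt_11 (s d₁ d₂ h₀ Rx Ry : ℝ)
    (hs : 0 < s) (hRx : 0 < Rx) (hRy : 0 < Ry)
    (hd₁ : 0 < d₁) (hd₁₂ : d₁ ≤ d₂)
    (hh₀ : h₀ ≥ (Ry + s) / 2)
    (hΔd : d₂ - d₁ < (2 * s / (2 * h₀ - s - Ry)) * d₁) :
    ∃ p : ℝ × ℝ, p ∈ (Icc (-(Rx/2)) (Rx/2) ×ˢ Icc (h₀ - Ry/2) (h₀ + Ry/2)) ∧
      (((fun q : ℝ × ℝ =>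
            (((d₂ * q.1 - (d₂ - d₁) * p.1) / d₁, (d₂ * q.2 - (d₂ - d₁) * p.2) / d₁) : ℝ × ℝ)) ''
          (Icc (-(s/2)) (s/2) ×ˢ Icc (-(s/2)) (s/2))) ∩
        (Icc (-(s/2)) (s/2) ×ˢ Icc (-(s/2)) (s/2))).Nonempty := by
  have hΔ : 0 ≤ d₂ - d₁ := by linarith
  have hden : 0 ≤ 2 * h₀ - s - Ry := by linarith
  have key : (d₂ - d₁) * (2 * h₀ - s - Ry) ≤ 2 * s * d₁ := by
    rcases eq_or_lt_of_le hden with h | h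
    · nlinarith [h]
    · rw [div_mul_eq_mul_div] at hΔd
      have h2 := (lt_div_iff₀ h).mp hΔd
      linarith
  refine ⟨(0, h₀ - Ry/2), ⟨⟨by linarith, by linarith⟩, ⟨le_refl _, by linarith⟩⟩, ?_⟩
  refine ⟨((d₂ * 0 - (d₂ - d₁) * 0) / d₁,
      (d₂ * (s/2) - (d₂ - d₁) * (h₀ - Ry/2)) / d₁),
    ⟨(0, s/2), ⟨⟨by linarith, by linarith⟩, ⟨by linarith, le_refl _⟩⟩, rfl⟩,
    ⟨?_, ?_⟩, ?_, ?_⟩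
  · simp; positivity
  · simp; positivity
  · rw [le_div_iff₀ hd₁]
    nlinarith
  · rw [div_le_iff₀ hd₁]
    nlinarith
end

section
/- For fixed a, b, d > 0, the function h₀ ↦ ∫_{−a}^{a} ∫_{h₀−b}^{h₀+b} d²/(d²+x²+y²)² dy dx is strictly decreasing on [0, ∞). -/
set_option maxHeartbeats 1000000


open Real MeasureTheory Set

/-- The single-user effective-DoF integral is strictly decreasing in the height
offset h₀ on [0, ∞). -/
theorem stmt_14 (a b d : ℝ) (ha : 0 < a) (hb : 0 < b) (hd : 0 < d) :
    StrictAntiOn (fun h₀ : ℝ =>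
        ∫ x in Icc (-a) a, ∫ y in Icc (h₀ - b) (h₀ + b), d^2 / (d^2 + x^2 + y^2)^2)
      (Ici 0) := by
  set f : ℝ → ℝ → ℝ := fun x y => d^2 / (d^2 + x^2 + y^2)^2 with hf_def
  have hpos : ∀ x y : ℝ, 0 < d^2 + x^2 + y^2 := by intro x y; positivity
  have hf_cont : Continuous (Function.uncurry f) := by
    apply Continuous.div (by fun_prop) (by fun_prop)
    intro p
    have := hpos p.1 p.2
    positivity
  have hf_contx : ∀ x : ℝ, Continuous (f x) := fun x =>
    hf_cont.comp (Continuous.prodMk_right x)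
  -- inner integral as interval integral
  have g_def : ∀ (h : ℝ) (x : ℝ),
      ∫ y in Icc (h - b) (h + b), f x y = ∫ y in (h - b)..(h + b), f x y := by
    intro h x
    rw [intervalIntegral.integral_of_le (by linarith), integral_Icc_eq_integral_Ioc]
  intro h₁ hh₁ h₂ hh₂ h12
  simp only [mem_Ici] at hh₁ hh₂
  -- pointwise strict inequality of inner integrals
  have key : ∀ x : ℝ,
      (∫ y in (h₂ - b)..(h₂ + b), f x y) < ∫ y in (h₁ - b)..(h₁ + b), f x y := by
    intro x
    have hint : ∀ u v : ℝ, IntervalIntegrable (f x) volume u v :=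
      fun u v => (hf_contx x).intervalIntegrable u v
    have split : (∫ y in (h₁ - b)..(h₁ + b), f x y) - (∫ y in (h₂ - b)..(h₂ + b), f x y)
        = (∫ y in (h₁ - b)..(h₂ - b), f x y) - ∫ y in (h₁ + b)..(h₂ + b), f x y := by
      have e1 : (∫ y in (h₁ - b)..(h₁ + b), f x y) + ∫ y in (h₁ + b)..(h₂ + b), f x y
          = ∫ y in (h₁ - b)..(h₂ + b), f x y :=
        intervalIntegral.integral_add_adjacent_intervals (hint _ _) (hint _ _)
      have e2 : (∫ y in (h₁ - b)..(h₂ - b), f x y) + ∫ y in (h₂ - b)..(h₂ + b), f x y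
          = ∫ y in (h₁ - b)..(h₂ + b), f x y :=
        intervalIntegral.integral_add_adjacent_intervals (hint _ _) (hint _ _)
      linarith
    have shift : (∫ y in (h₁ + b)..(h₂ + b), f x y)
        = ∫ t in (h₁ - b)..(h₂ - b), f x (t + 2*b) := by
      rw [intervalIntegral.integral_comp_add_right (f x) (2*b),
        show h₁ - b + 2*b = h₁ + b from by ring, show h₂ - b + 2*b = h₂ + b from by ring]
    have comb : (∫ y in (h₁ - b)..(h₁ + b), f x y) - (∫ y in (h₂ - b)..(h₂ + b), f x y)
        = ∫ t in (h₁ - b)..(h₂ - b), (f x t - f x (t + 2*b)) := by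
      rw [split, shift, intervalIntegral.integral_sub (hint _ _)]
      exact (((hf_contx x).comp (by fun_prop)).intervalIntegrable _ _)
    have hposint : 0 < ∫ t in (h₁ - b)..(h₂ - b), (f x t - f x (t + 2*b)) := by
      apply intervalIntegral.intervalIntegral_pos_of_pos_on
      · exact (((hf_contx x).sub ((hf_contx x).comp (by fun_prop))).intervalIntegrable _ _)
      · intro t ht
        obtain ⟨ht1, ht2⟩ := ht
        have htb : -b < t := by linarith
        have hsq : t^2 < (t + 2*b)^2 := by nlinarith
        have h1 : 0 < d^2 + x^2 + t^2 := hpos x t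
        have h2 : d^2 + x^2 + t^2 < d^2 + x^2 + (t + 2*b)^2 := by linarith
        have : (d^2 + x^2 + t^2)^2 < (d^2 + x^2 + (t + 2*b)^2)^2 := by nlinarith
        have := div_lt_div_of_pos_left (by positivity : (0:ℝ) < d^2) (by positivity) this
        simpa [hf_def, sub_pos] using this
      · linarith
    linarith
  -- continuity in x of the inner integrals, hence integrability
  have gcont : ∀ h : ℝ, Continuous fun x => ∫ y in (h - b)..(h + b), f x y := by
    intro h
    exact intervalIntegral.continuous_parametric_intervalIntegral_of_continuous' hf_cont _ _
  have gint : ∀ h : ℝ, IntegrableOn (fun x => ∫ y in (h - b)..(h + b), f x y)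
      (Icc (-a) a) volume := fun h => (gcont h).integrableOn_Icc
  -- rewrite the outer integrals
  have rw1 : ∀ h : ℝ, (∫ x in Icc (-a) a, ∫ y in Icc (h - b) (h + b), f x y)
      = ∫ x in Icc (-a) a, ∫ y in (h - b)..(h + b), f x y := by
    intro h
    exact setIntegral_congr_fun measurableSet_Icc fun x _ => g_def h x
  show (∫ x in Icc (-a) a, ∫ y in Icc (h₂ - b) (h₂ + b), f x y)
      < ∫ x in Icc (-a) a, ∫ y in Icc (h₁ - b) (h₁ + b), f x y
  rw [rw1 h₁, rw1 h₂, ← sub_pos, ← integral_sub (gint h₁) (gint h₂)]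
  set φ : ℝ → ℝ := fun x =>
    (∫ y in (h₁ - b)..(h₁ + b), f x y) - ∫ y in (h₂ - b)..(h₂ + b), f x y with hφ
  have hφpos : ∀ x, 0 < φ x := fun x => sub_pos.2 (key x)
  rw [setIntegral_pos_iff_support_of_nonneg_ae
      (Filter.Eventually.of_forall fun x => (hφpos x).le)
      ((gint h₁).sub (gint h₂))]
  have hsupp : Function.support φ ∩ Icc (-a) a = Icc (-a) a := by
    apply inter_eq_self_of_subset_right
    intro x _
    exact (hφpos x).ne'
  rw [hsupp, Real.volume_Icc]
  simp only [ENNReal.ofReal_pos]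
  linarith
end

section
/- Let 0 < d₁ < d₂ and s, h₀, R_y > 0 with h₀ ≥ (R_y + s)/2. Define Δd = d₂ − d₁. For an observation point with coordinates (r_x, r_y) in the BS frame (user surfaces centered at height −h relative to the BS center), the blocked region S_blocked(r) ⊆ [−s/2, s/2]² given by Eq. (18) is empty (measure zero) whenever r_y > −h₀ + (s/2)·(d₂+d₁)/(d₂−d₁) or |r_x| > (s/2)·(d₂+d₁)/(d₂−d₁). -/
open Set

/-- The blocked region (Eq. (18)): the portion of user 2's square covered by the
central projection of user 1's square from the observation point
`(r_x, r_y + h₀)` (BS-centered coordinates) is empty whenever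
`r_y > −h₀ + (s/2)(d₂+d₁)/(d₂−d₁)` or `|r_x| > (s/2)(d₂+d₁)/(d₂−d₁)`. -/
theorem stmt_17 (s d₁ d₂ h₀ Ry rx ry : ℝ)
    (hs : 0 < s) (hRy : 0 < Ry) (hh₀ : h₀ ≥ (Ry + s) / 2)
    (hd₁ : 0 < d₁) (hd₁₂ : d₁ < d₂)
    (hout : ry > -h₀ + (s/2) * (d₂ + d₁) / (d₂ - d₁) ∨
            |rx| > (s/2) * (d₂ + d₁) / (d₂ - d₁)) :
    (Icc (-(s/2)) (s/2) ×ˢ Icc (-(s/2)) (s/2)) ∩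
      ((fun q : ℝ × ℝ =>
          (((d₂ * q.1 - (d₂ - d₁) * rx) / d₁,
            (d₂ * q.2 - (d₂ - d₁) * (ry + h₀)) / d₁) : ℝ × ℝ)) ''
        (Icc (-(s/2)) (s/2) ×ˢ Icc (-(s/2)) (s/2))) = ∅ := by
  have hΔ : 0 < d₂ - d₁ := by linarith
  rw [eq_empty_iff_forall_notMem]
  rintro ⟨px, py⟩ ⟨⟨hx, hy⟩, q, ⟨hq1, hq2⟩, heq⟩
  simp only [Prod.mk.injEq] at heq
  obtain ⟨h1, h2⟩ := heq
  simp only [mem_Icc] at hx hy hq1 hq2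
  rcases hout with h | h
  · -- y-coordinate too small
    have hineq : (d₂ - d₁) * (ry + h₀) > (s/2) * (d₂ + d₁) := by
      have := (div_lt_iff₀ hΔ).mp (by linarith : (s/2) * (d₂ + d₁) / (d₂ - d₁) < ry + h₀)
      linarith
    have : py < -(s/2) := by
      rw [← h2, div_lt_iff₀ hd₁]
      nlinarith [hq2.2, hd₁.le]
    linarith [hy.1]
  · have hineq : (d₂ - d₁) * |rx| > (s/2) * (d₂ + d₁) := by
      have := (div_lt_iff₀ hΔ).mp h
      linarith
    rcases abs_cases rx with ⟨he, _⟩ | ⟨he, _⟩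
    · -- rx ≥ 0: px < -(s/2)
      rw [he] at hineq
      have : px < -(s/2) := by
        rw [← h1, div_lt_iff₀ hd₁]
        nlinarith [hq1.2]
      linarith [hx.1]
    · -- rx < 0: px > s/2
      rw [he] at hineq
      have : s/2 < px := by
        rw [← h1, lt_div_iff₀ hd₁]
        nlinarith [hq1.1]
      linarith [hx.2]
end

section
/- For 0 < d₁ ≤ d₂, a, b > 0 fixed, ∫_{−a}^{a}∫_{−b}^{b} d₁²/(d₁²+x²+y²)² dy dx ≥ ∫_{−a}^{a}∫_{−b}^{b} d₂²/(d₂²+x²+y²)² dy dx, i.e., the closer user has at least as many effective DoF as the farther user (for centered surfaces). -/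
open Real MeasureTheory Set

private lemma phi_cont : Continuous (Function.uncurry fun u w : ℝ => 1 / (1 + u^2 + w^2)^2) := by
  apply Continuous.div continuous_const (by fun_prop)
  intro p; positivity

private lemma scale (a b d : ℝ) (hd : 0 < d) :
    (∫ x in (-a)..a, ∫ y in (-b)..b, d^2 / (d^2 + x^2 + y^2)^2)
      = ∫ u in (-(a/d))..(a/d), ∫ w in (-(b/d))..(b/d), 1 / (1 + u^2 + w^2)^2 := by
  have hd' : d ≠ 0 := hd.ne'
  have key : ∀ x y : ℝ, d^2 / (d^2 + (x*d)^2 + (y*d)^2)^2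
      = d⁻¹ * (d⁻¹ * (1 / (1 + x^2 + y^2)^2)) := by
    intro x y
    have h1 : (0:ℝ) < 1 + x^2 + y^2 := by positivity
    field_simp
  have inner : ∀ x : ℝ, (∫ y in (-b)..b, d^2 / (d^2 + x^2 + y^2)^2)
      = d * ∫ w in (-(b/d))..(b/d), d^2 / (d^2 + x^2 + (w*d)^2)^2 := by
    intro x
    have h := intervalIntegral.smul_integral_comp_mul_right (a := -(b/d)) (b := b/d)
      (fun y => d^2 / (d^2 + x^2 + y^2)^2) d
    simp only [neg_mul, div_mul_cancel₀ _ hd', smul_eq_mul] at h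
    exact h.symm
  simp_rw [inner]
  have h2 := intervalIntegral.smul_integral_comp_mul_right (a := -(a/d)) (b := a/d)
    (fun x => d * ∫ w in (-(b/d))..(b/d), d^2 / (d^2 + x^2 + (w*d)^2)^2) d
  simp only [neg_mul, div_mul_cancel₀ _ hd', smul_eq_mul] at h2
  rw [← h2, ← intervalIntegral.integral_const_mul]
  congr 1; funext u
  rw [show (∫ w in (-(b/d))..(b/d), d ^ 2 / (d ^ 2 + (u*d) ^ 2 + (w * d) ^ 2) ^ 2)
      = ∫ w in (-(b/d))..(b/d), d⁻¹ * (d⁻¹ * (1 / (1 + u^2 + w^2)^2)) by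
    congr 1; funext w; exact key u w]
  rw [intervalIntegral.integral_const_mul, intervalIntegral.integral_const_mul]
  rw [show ∀ X : ℝ, d * (d * (d⁻¹ * (d⁻¹ * X))) = X from fun X => by field_simp]

/-- The closer user has at least as many effective DoF as the farther user. -/
theorem stmt_19 (a b d₁ d₂ : ℝ) (ha : 0 < a) (hb : 0 < b)
    (hd₁ : 0 < d₁) (hd : d₁ ≤ d₂) :
    (∫ x in Icc (-a) a, ∫ y in Icc (-b) b, d₂^2 / (d₂^2 + x^2 + y^2)^2)
      ≤ ∫ x in Icc (-a) a, ∫ y in Icc (-b) b, d₁^2 / (d₁^2 + x^2 + y^2)^2 := by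
  have hd₂ : 0 < d₂ := hd₁.trans_le hd
  have hab : -a ≤ a := by linarith
  have hbb : -b ≤ b := by linarith
  -- convert Icc set integrals to interval integrals
  have conv : ∀ d : ℝ, (∫ x in Icc (-a) a, ∫ y in Icc (-b) b, d^2 / (d^2 + x^2 + y^2)^2)
      = ∫ x in (-a)..a, ∫ y in (-b)..b, d^2 / (d^2 + x^2 + y^2)^2 := by
    intro d
    rw [intervalIntegral.integral_of_le hab, ← integral_Icc_eq_integral_Ioc]
    congr 1; funext x
    rw [intervalIntegral.integral_of_le hbb, ← integral_Icc_eq_integral_Ioc]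
  rw [conv d₁, conv d₂, scale a b d₁ hd₁, scale a b d₂ hd₂]
  set φ : ℝ → ℝ → ℝ := fun u w => 1 / (1 + u^2 + w^2)^2 with hφ
  have hφ0 : ∀ u w, 0 ≤ φ u w := fun u w => by positivity
  have hφc := phi_cont
  have ha2 : a / d₂ ≤ a / d₁ := div_le_div_of_nonneg_left ha.le hd₁ hd
  have hb2 : b / d₂ ≤ b / d₁ := div_le_div_of_nonneg_left hb.le hd₁ hd
  have ha1 : 0 ≤ a / d₁ := by positivity
  have hb1 : 0 ≤ b / d₁ := by positivity
  have ha2' : 0 ≤ a / d₂ := by positivity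
  have hb2' : 0 ≤ b / d₂ := by positivity
  have hint : ∀ u c e : ℝ, IntervalIntegrable (fun w => φ u w) volume c e :=
    fun u c e => (hφc.comp (by fun_prop : Continuous fun w : ℝ => (u, w))).intervalIntegrable c e
  have Hcont : ∀ c e : ℝ, Continuous fun u => ∫ w in c..e, φ u w := fun c e =>
    intervalIntegral.continuous_parametric_intervalIntegral_of_continuous' hφc c e
  have step1 : (∫ u in (-(a/d₂))..(a/d₂), ∫ w in (-(b/d₂))..(b/d₂), φ u w)
      ≤ ∫ u in (-(a/d₂))..(a/d₂), ∫ w in (-(b/d₁))..(b/d₁), φ u w := by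
    apply intervalIntegral.integral_mono_on (by linarith)
      ((Hcont _ _).intervalIntegrable _ _) ((Hcont _ _).intervalIntegrable _ _)
    intro u _
    exact intervalIntegral.integral_mono_interval (by linarith) (by linarith) hb2
      (Filter.Eventually.of_forall fun w => hφ0 u w) (hint u _ _)
  have step2 : (∫ u in (-(a/d₂))..(a/d₂), ∫ w in (-(b/d₁))..(b/d₁), φ u w)
      ≤ ∫ u in (-(a/d₁))..(a/d₁), ∫ w in (-(b/d₁))..(b/d₁), φ u w := by
    apply intervalIntegral.integral_mono_interval (by linarith) (by linarith) ha2
      ?_ ((Hcont _ _).intervalIntegrable _ _)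
    apply Filter.Eventually.of_forall
    intro u
    exact intervalIntegral.integral_nonneg (by linarith) fun w _ => hφ0 u w
  exact step1.trans step2
end
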